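/- In the group G of the Fuchs example (subgroup of ℚ² generated by (1,0), (0,1), (1/2,1/2), (1/3^k,0), and (0,1/5^k) for all k ≥ 1), the element x₁ = (1,0) has characteristic with h_3(x₁) = ∞ and h_p(x₁) finite for all primes p ≠ 3; in particular h_2(x₁) = 0. -/

import Mathlib

def fuchsGens : Set (ℚ × ℚ) :=
  {((1 : ℚ), (0 : ℚ)), ((0 : ℚ), (1 : ℚ)), ((1/2 : ℚ), (1/2 : ℚ))} ∪
    {x | ∃ k : ℕ, 1 ≤ k ∧ x = ((1 / 3 ^ k : ℚ), (0 : ℚ))} ∪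
    {x | ∃ k : ℕ, 1 ≤ k ∧ x = ((0 : ℚ), (1 / 5 ^ k : ℚ))}

def fuchsGroup : AddSubgroup (ℚ × ℚ) := AddSubgroup.closure fuchsGens

def fuchsP (x : ℚ × ℚ) : Prop :=
  ∃ (i : ℕ) (s t : ℤ), 2 * x.1 = (s : ℚ) / 3 ^ i ∧ 2 * x.2 = (t : ℚ) / 5 ^ i ∧ Even (s + t)

lemma fuchsP_of_mem {x : ℚ × ℚ} (hx : x ∈ fuchsGroup) : fuchsP x := by
  induction hx using AddSubgroup.closure_induction with
  | mem y hy =>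
    simp only [fuchsGens, Set.mem_union, Set.mem_insert_iff, Set.mem_singleton_iff,
      Set.mem_setOf_eq] at hy
    rcases hy with ((rfl | rfl | rfl) | ⟨k, hk, rfl⟩) | ⟨k, hk, rfl⟩
    · exact ⟨0, 2, 0, by norm_num, by norm_num, by decide⟩
    · exact ⟨0, 0, 2, by norm_num, by norm_num, by decide⟩
    · exact ⟨0, 1, 1, by norm_num, by norm_num, by decide⟩
    · exact ⟨k, 2, 0, by push_cast; rw [div_eq_mul_inv, div_eq_mul_inv]; ring,
        by norm_num, by decide⟩
    · exact ⟨k, 0, 2, by norm_num, by push_cast; rw [div_eq_mul_inv, div_eq_mul_inv]; ring,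
        by decide⟩
  | zero => exact ⟨0, 0, 0, by norm_num, by norm_num, by decide⟩
  | add a b _ _ ha hb =>
    obtain ⟨i, s, t, h1, h2, h3⟩ := ha
    obtain ⟨j, u, v, h4, h5, h6⟩ := hb
    have h3i : (3:ℚ) ^ i ≠ 0 := by positivity
    have h3j : (3:ℚ) ^ j ≠ 0 := by positivity
    have h5i : (5:ℚ) ^ i ≠ 0 := by positivity
    have h5j : (5:ℚ) ^ j ≠ 0 := by positivity
    refine ⟨i + j, s * 3 ^ j + u * 3 ^ i, t * 5 ^ j + v * 5 ^ i, ?_, ?_, ?_⟩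
    · rw [Prod.fst_add, mul_add, h1, h4, div_add_div _ _ h3i h3j, pow_add]
      push_cast
      rw [div_eq_div_iff (by positivity) (by positivity)]
      ring
    · rw [Prod.snd_add, mul_add, h2, h5, div_add_div _ _ h5i h5j, pow_add]
      push_cast
      rw [div_eq_div_iff (by positivity) (by positivity)]
      ring
    · obtain ⟨a3, ha3⟩ : Odd ((3:ℤ) ^ i) := Odd.pow (by decide)
      obtain ⟨b3, hb3⟩ : Odd ((3:ℤ) ^ j) := Odd.pow (by decide)
      obtain ⟨c5, hc5⟩ : Odd ((5:ℤ) ^ i) := Odd.pow (by decide)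
      obtain ⟨d5, hd5⟩ : Odd ((5:ℤ) ^ j) := Odd.pow (by decide)
      obtain ⟨e, he⟩ := h3
      obtain ⟨f, hf⟩ := h6
      refine ⟨s * b3 + u * a3 + t * d5 + v * c5 + e + f, ?_⟩
      rw [ha3, hb3, hc5, hd5]
      linear_combination he + hf
  | neg a _ ha =>
    obtain ⟨i, s, t, h1, h2, h3⟩ := ha
    refine ⟨i, -s, -t, ?_, ?_, by simpa [add_comm] using h3.neg⟩
    · push_cast; rw [Prod.fst_neg, mul_neg, h1]; ring
    · push_cast; rw [Prod.snd_neg, mul_neg, h2]; ring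

/-- h_3(x₁) = ∞, h_p(x₁) finite for p ≠ 3, and h_2(x₁) = 0 in the Fuchs group. -/
theorem fuchs_characteristic_x1 :
    (∀ k : ℕ, ∃ y ∈ fuchsGroup, ((3 : ℤ) ^ k) • y = (((1 : ℚ), (0 : ℚ)) : ℚ × ℚ)) ∧
    (∀ p : ℕ, p.Prime → p ≠ 3 →
      ∃ N : ℕ, ∀ k : ℕ,
        (∃ y ∈ fuchsGroup, ((p : ℤ) ^ k) • y = (((1 : ℚ), (0 : ℚ)) : ℚ × ℚ)) → k ≤ N) ∧
    ¬ ∃ y ∈ fuchsGroup, (2 : ℤ) • y = (((1 : ℚ), (0 : ℚ)) : ℚ × ℚ) := by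
  refine ⟨?_, ?_, ?_⟩
  · intro k
    rcases k with _ | k
    · refine ⟨(1, 0), AddSubgroup.subset_closure ?_, by simp⟩
      exact Set.mem_union_left _ (Set.mem_union_left _ (by norm_num))
    · refine ⟨(1 / 3 ^ (k + 1), 0), AddSubgroup.subset_closure
        (Set.mem_union_left _ (Set.mem_union_right _ ⟨k + 1, by omega, rfl⟩)), ?_⟩
      have h3 : ((3:ℚ) ^ (k+1)) ≠ 0 := by positivity
      have : ((3:ℤ) ^ (k+1)) • ((1 / 3 ^ (k + 1) : ℚ), (0:ℚ))
          = ((3:ℚ) ^ (k+1) * (1 / 3 ^ (k + 1)), (3:ℚ) ^ (k+1) * 0) := by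
        simp [Prod.smul_mk, zsmul_eq_mul]
      rw [this]
      rw [mul_one_div, div_self h3, mul_zero]
  · intro p hp hp3
    refine ⟨1, fun k ⟨y, hy, hk⟩ => ?_⟩
    obtain ⟨i, s, t, h1, h2, h3⟩ := fuchsP_of_mem hy
    have h3q : (3:ℚ) ^ i ≠ 0 := by positivity
    have hy1 : ((p:ℚ)) ^ k * y.1 = 1 := by
      have := congrArg Prod.fst hk
      simp only [Prod.smul_fst, zsmul_eq_mul] at this
      push_cast at this
      exact this
    rw [eq_div_iff h3q] at h1
    have key : (2 * 3 ^ i : ℤ) = s * (p : ℤ) ^ k := by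
      have : 2 * (3:ℚ) ^ i = (s : ℚ) * (p:ℚ) ^ k := by
        linear_combination (-2*(3:ℚ)^i) * hy1 + ((p:ℚ)^k) * h1
      exact_mod_cast this
    have hdvd : (p : ℤ) ^ k ∣ 2 * 3 ^ i := Dvd.intro_left s key.symm
    have hdvdn : p ^ k ∣ 2 * 3 ^ i := by exact_mod_cast hdvd
    have hcop : Nat.Coprime (p ^ k) (3 ^ i) :=
      Nat.Coprime.pow k i ((Nat.coprime_primes hp Nat.prime_three).mpr hp3)
    have h2d : p ^ k ∣ 2 := Nat.Coprime.dvd_of_dvd_mul_right hcop hdvdn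
    have hle : p ^ k ≤ 2 := Nat.le_of_dvd (by norm_num) h2d
    have h2k : 2 ^ k ≤ 2 ^ 1 := le_trans (Nat.pow_le_pow_left hp.two_le k) (by simpa using hle)
    exact (Nat.pow_le_pow_iff_right one_lt_two).mp h2k
  · rintro ⟨y, hy, hk⟩
    obtain ⟨i, s, t, h1, h2, h3⟩ := fuchsP_of_mem hy
    have h3q : (3:ℚ) ^ i ≠ 0 := by positivity
    have h5q : (5:ℚ) ^ i ≠ 0 := by positivity
    have hy1 : 2 * y.1 = 1 := by
      have := congrArg Prod.fst hk
      simp only [Prod.smul_fst, zsmul_eq_mul] at this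
      push_cast at this
      exact this
    have hy2 : 2 * y.2 = 0 := by
      have := congrArg Prod.snd hk
      simp only [Prod.smul_snd, zsmul_eq_mul] at this
      push_cast at this
      exact this
    rw [hy1] at h1
    rw [hy2] at h2
    have hs : (s : ℚ) = 3 ^ i := by
      rw [eq_comm, div_eq_iff h3q, one_mul] at h1
      exact h1
    have hsZ : s = 3 ^ i := by exact_mod_cast hs
    have ht : t = 0 := by
      have : (t : ℚ) = 0 := by
        rw [eq_comm, div_eq_iff h5q, zero_mul] at h2
        exact h2
      exact_mod_cast this
    rw [hsZ, ht, add_zero] at h3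
    have hodd : Odd ((3:ℤ) ^ i) := Odd.pow (by decide)
    exact (Int.not_odd_iff_even.mpr h3) hodd
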